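/- Let $(R, \mathfrak{m}, K)$ be a Noetherian local ring with infinite residue field and $\mathrm{depth}\,R > 0$. If every parameter ideal $Q$ that is a reduction of $\mathfrak{m}$ satisfies $I\mathfrak{m}^{k+1}:\mathfrak{m} = I\mathfrak{m}^k$ for all $k \geq 0$ with $I = Q$ (i.e., $\mathfrak{d}_3(Q) = 0$), and some such parameter ideal reduction exists, then $R$ is regular. -/
import Mathlib


open IsLocalRing

/-- A Noetherian local ring is regular if its maximal ideal can be generated by
`dim R` elements. -/
def IsRegularLocal (R : Type*) [CommRing R] [IsLocalRing R] : Prop :=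
  ∃ (k : ℕ) (f : Fin k → R), Ideal.span (Set.range f) = maximalIdeal R ∧
    (k : WithBot (WithTop ℕ)) = ringKrullDim R

/-- `Q` is a parameter ideal: it is generated by `dim R` elements and is an ideal of
definition, i.e. its radical is the maximal ideal. -/
def IsParameterIdeal {R : Type*} [CommRing R] [IsLocalRing R] (Q : Ideal R) : Prop :=
  (∃ (k : ℕ) (f : Fin k → R), Q = Ideal.span (Set.range f) ∧
    (k : WithBot (WithTop ℕ)) = ringKrullDim R) ∧ Q.radical = maximalIdeal R

/-- If some parameter ideal is a reduction of `𝔪` and every parameter ideal reduction `Q`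
of `𝔪` satisfies `Q𝔪^(k+1) : 𝔪 = Q𝔪^k` for all `k ≥ 0` (i.e. `𝔡₃(Q) = 0`), then `R` is
regular. -/
theorem regular_of_daoNumber3_vanishing {R : Type*} [CommRing R] [IsNoetherianRing R]
    [IsLocalRing R] [Infinite (IsLocalRing.ResidueField R)]
    (hdepth : ∃ x ∈ maximalIdeal R, x ∈ nonZeroDivisors R)
    (hexists : ∃ Q : Ideal R, IsParameterIdeal Q ∧ Q ≤ maximalIdeal R ∧
      ∃ r : ℕ, Q * maximalIdeal R ^ r = maximalIdeal R ^ (r + 1))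
    (hall : ∀ Q : Ideal R, IsParameterIdeal Q → Q ≤ maximalIdeal R →
      (∃ r : ℕ, Q * maximalIdeal R ^ r = maximalIdeal R ^ (r + 1)) →
      ∀ k : ℕ, Submodule.colon (Q * maximalIdeal R ^ (k + 1)) (maximalIdeal R) =
        Q * maximalIdeal R ^ k) :
    IsRegularLocal R := by
  obtain ⟨Q, hQ, hle, r, hr⟩ := hexists
  have hcolon := hall Q hQ hle ⟨r, hr⟩
  -- descending induction: Q * 𝔪^(m+1) = 𝔪^(m+2) → Q * 𝔪^m = 𝔪^(m+1)
  have step : ∀ m : ℕ, Q * maximalIdeal R ^ (m + 1) = maximalIdeal R ^ (m + 2) →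
      Q * maximalIdeal R ^ m = maximalIdeal R ^ (m + 1) := by
    intro m hm
    apply le_antisymm
    · calc Q * maximalIdeal R ^ m ≤ maximalIdeal R * maximalIdeal R ^ m :=
            Ideal.mul_mono_left hle
        _ = maximalIdeal R ^ (m + 1) := (pow_succ' _ _).symm
    · rw [← hcolon m]
      intro x hx
      rw [Submodule.mem_colon]
      intro p hp
      have : x * p ∈ (maximalIdeal R ^ (m + 1)) * maximalIdeal R :=
        Ideal.mul_mem_mul hx hp
      rw [hm]
      rw [show maximalIdeal R ^ (m+1) * maximalIdeal R = maximalIdeal R ^ (m+2) from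
        (pow_succ _ _).symm] at this
      exact this
  -- now get Q * 𝔪^k = 𝔪^(k+1) for all k ≤ r by descending
  have hall2 : ∀ j : ℕ, j ≤ r → Q * maximalIdeal R ^ (r - j) = maximalIdeal R ^ (r - j + 1) := by
    intro j
    induction j with
    | zero => intro _; simpa using hr
    | succ n ih =>
      intro hn
      have h1 : n ≤ r := Nat.le_of_succ_le hn
      have h2 := ih h1
      have h3 : r - n = (r - (n+1)) + 1 := by omega
      rw [h3] at h2
      exact step _ (by rw [show r - (n+1) + 1 + 1 = r - (n+1) + 2 from rfl] at h2; exact h2)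
  have hQm : Q = maximalIdeal R := by
    have := hall2 r le_rfl
    simpa using this
  obtain ⟨⟨k, f, hf, hk⟩, _⟩ := hQ
  exact ⟨k, f, by rw [← hf, hQm], hk⟩
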